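/- Let M = S^1 be a circle of length 2R equipped with its inner (arc-length) metric. Then OR_M(k) = 2 for all k ≥ 2. More precisely, for any total order T on S^1 and any ε > 0 there exists a snake x_1 <_T x_2 <_T x_3 on 3 points such that x_1 and x_3 lie in the ε-neighborhood of some point p and x_2 lies in the ε-neighborhood of the point antipodal to p. -/

import Mathlib

open scoped Classical

/-- Length of the path visiting the points of a list in order,
for a distance function `d`. -/
noncomputable def pathLen {α : Type*} (d : α → α → ℝ) : List α → ℝ
  | [] => 0
  | [_] => 0
  | a :: b :: l => d a b + pathLen d (b :: l)

/-- `lopt d X` : minimal length of a path visiting all points of the finite set `X`. -/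
noncomputable def lopt {α : Type*} (d : α → α → ℝ) (X : Finset α) : ℝ :=
  sInf {r : ℝ | ∃ l : List α, l.Nodup ∧ l.toFinset = X ∧ pathLen d l = r}

/-- `lord d T X` : length of the path visiting all points of `X` in the order `T`. -/
noncomputable def lord {α : Type*} (d : α → α → ℝ) (T : LinearOrder α) (X : Finset α) : ℝ :=
  sInf {r : ℝ | ∃ l : List α, l.Nodup ∧ l.toFinset = X ∧ List.Pairwise T.lt l ∧ pathLen d l = r}

/-- The order ratio function `OR_{M,T}(k)`. -/
noncomputable def ORd {α : Type*} (d : α → α → ℝ) (T : LinearOrder α) (k : ℕ) : ℝ :=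
  sSup {r : ℝ | ∃ X : Finset α, 2 ≤ X.card ∧ X.card ≤ k + 1 ∧ r = lord d T X / lopt d X}

/-- The order ratio function of the (unordered) space: infimum over all total orders. -/
noncomputable def ORsp {α : Type*} (d : α → α → ℝ) (k : ℕ) : ℝ :=
  ⨅ T : LinearOrder α, ORd d T k

section generic
variable {α : Type*} [MetricSpace α]

lemma pathLen_nonneg : ∀ l : List α, 0 ≤ pathLen dist l
  | [] => le_refl _
  | [_] => le_refl _
  | a :: b :: l => add_nonneg dist_nonneg (pathLen_nonneg (b :: l))

lemma pathLen_cons_le (a : α) : ∀ l : List α, pathLen dist l ≤ pathLen dist (a :: l)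
  | [] => le_refl _
  | b :: l => le_add_of_nonneg_left dist_nonneg

lemma dist_head_le (a : α) : ∀ l : List α, ∀ b ∈ l, dist a b ≤ pathLen dist (a :: l)
  | c :: l, b, hb => by
    rcases List.mem_cons.1 hb with rfl | hb
    · exact le_add_of_nonneg_right (pathLen_nonneg _)
    · calc dist a b ≤ dist a c + dist c b := dist_triangle _ _ _
        _ ≤ dist a c + pathLen dist (c :: l) :=
          add_le_add_right (dist_head_le c l b hb) _

lemma dist_le_pathLen : ∀ l : List α, ∀ a ∈ l, ∀ b ∈ l, dist a b ≤ pathLen dist l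
  | c :: l, a, ha, b, hb => by
    rcases List.mem_cons.1 ha with ha' | ha'
    · rcases List.mem_cons.1 hb with hb' | hb'
      · rw [ha', hb']; simpa using pathLen_nonneg (c :: l)
      · rw [ha']; exact dist_head_le c l b hb'
    · rcases List.mem_cons.1 hb with hb' | hb'
      · rw [hb', dist_comm]; exact dist_head_le c l a ha'
      · exact (dist_le_pathLen l a ha' b hb').trans (pathLen_cons_le c l)

lemma toFinset_eq_of_forall {inst : DecidableEq α} {l : List α} {X : Finset α}
    (h : ∀ a, a ∈ l ↔ a ∈ X) : @List.toFinset α inst l = X := by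
  ext a
  rw [@List.mem_toFinset α inst]
  exact h a

lemma mem_iff_of_toFinset_eq {inst : DecidableEq α} {l : List α} {X : Finset α}
    (h : @List.toFinset α inst l = X) : ∀ a, a ∈ l ↔ a ∈ X := by
  intro a
  rw [← h, @List.mem_toFinset α inst]

lemma loptSet_nonempty (X : Finset α) :
    {r : ℝ | ∃ l : List α, l.Nodup ∧ l.toFinset = X ∧ pathLen dist l = r}.Nonempty :=
  ⟨_, X.toList, X.nodup_toList, X.toList_toFinset, rfl⟩

lemma lopt_le {X : Finset α} {l : List α} (h1 : l.Nodup) (h2 : l.toFinset = X) :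
    lopt dist X ≤ pathLen dist l :=
  csInf_le ⟨0, fun r ⟨l', _, _, hl'⟩ => hl' ▸ pathLen_nonneg l'⟩ ⟨l, h1, h2, rfl⟩

lemma le_lopt {X : Finset α} {c : ℝ}
    (h : ∀ l : List α, l.Nodup → l.toFinset = X → c ≤ pathLen dist l) :
    c ≤ lopt dist X :=
  le_csInf (loptSet_nonempty X) (fun r ⟨l, h1, h2, hl⟩ => hl ▸ h l h1 h2)

lemma lopt_nonneg (X : Finset α) : 0 ≤ lopt dist X :=
  le_lopt fun l _ _ => pathLen_nonneg l

lemma dist_le_lopt {X : Finset α} {a b : α} (ha : a ∈ X) (hb : b ∈ X) :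
    dist a b ≤ lopt dist X :=
  le_lopt fun l _ h2 => dist_le_pathLen l a (by rw [← h2] at ha; exact List.mem_toFinset.1 ha)
    b (by rw [← h2] at hb; exact List.mem_toFinset.1 hb)

lemma lopt_pos {X : Finset α} (h : 2 ≤ X.card) : 0 < lopt dist X := by
  obtain ⟨a, ha, b, hb, hab⟩ := Finset.one_lt_card.1 h
  exact lt_of_lt_of_le (dist_pos.2 hab) (dist_le_lopt ha hb)

instance isAntisymmLt (T : LinearOrder α) : IsAntisymm α T.lt :=
  ⟨fun a b h1 h2 => absurd h2 (letI := T; lt_asymm h1)⟩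

lemma lord_eq_of {X : Finset α} (T : LinearOrder α) {l : List α} (h1 : l.Nodup)
    (h2 : l.toFinset = X) (h3 : List.Pairwise T.lt l) :
    lord dist T X = pathLen dist l := by
  have : {r : ℝ | ∃ l' : List α, l'.Nodup ∧ l'.toFinset = X ∧ List.Pairwise T.lt l' ∧
      pathLen dist l' = r} = {pathLen dist l} := by
    ext r
    constructor
    · rintro ⟨l', h1', h2', h3', rfl⟩
      have : l' = l := List.Perm.eq_of_pairwise' h3' h3
        (List.perm_of_nodup_nodup_toFinset_eq h1' h1 (h2'.trans h2.symm))
      simp [this]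
    · rintro rfl
      exact ⟨l, h1, h2, h3, rfl⟩
  rw [lord, this, csInf_singleton]

lemma pathLen_le_of_mem {l : List α} {c : ℝ} (hc : 0 ≤ c)
    (h : ∀ a ∈ l, ∀ b ∈ l, dist a b ≤ c) :
    pathLen dist l ≤ (l.length - 1 : ℕ) * c := by
  induction l with
  | nil => simp [pathLen]
  | cons a t ih =>
    match t with
    | [] => simp [pathLen]
    | b :: t' =>
      have h1 : dist a b ≤ c := h a (by simp) b (by simp)
      have h2 : pathLen dist (b :: t') ≤ ((b :: t').length - 1 : ℕ) * c :=
        ih (fun x hx y hy => h x (List.mem_cons_of_mem _ hx) y (List.mem_cons_of_mem _ hy))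
      have : ((a :: b :: t').length - 1 : ℕ) = ((b :: t').length - 1 : ℕ) + 1 := by
        simp
      rw [pathLen, this]
      push_cast
      linarith

end generic

section glist
variable {α β : Type*}

lemma pathLen_eq_zip (d : α → α → ℝ) :
    ∀ l : List α, pathLen d l = ((l.zip l.tail).map (fun q => d q.1 q.2)).sum
  | [] => by simp [pathLen]
  | [a] => by simp [pathLen]
  | a :: b :: t => by
    rw [pathLen, pathLen_eq_zip d (b :: t)]
    simp [List.zip_cons_cons]

lemma pathLen_map (d : α → α → ℝ) (g : β → α) :
    ∀ σ : List β, pathLen d (σ.map g) = pathLen (fun a b => d (g a) (g b)) σ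
  | [] => rfl
  | [a] => rfl
  | a :: b :: t => by
    rw [List.map_cons, List.map_cons, pathLen, pathLen, ← List.map_cons (f := g) (a := b) (l := t),
      pathLen_map d g (b :: t)]

lemma pathLen_range_map (d : α → α → ℝ) :
    ∀ (n : ℕ) (g : ℕ → α), pathLen d ((List.range (n + 1)).map g)
      = ∑ i ∈ Finset.range n, d (g i) (g (i + 1))
  | 0, g => by
    have : List.range 1 = [0] := rfl
    rw [this]
    simp [pathLen]
  | (n + 1), g => by
    have h1 : List.range (n + 1 + 1) = 0 :: (List.range (n + 1)).map Nat.succ :=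
      List.range_succ_eq_map (n := n + 1)
    rw [h1, List.map_cons, List.map_map]
    have h2 : (List.range (n + 1)).map (g ∘ Nat.succ) = ((List.range (n + 1)).map (fun i => g (i + 1))) := rfl
    have h3 : List.range (n + 1) = 0 :: (List.range n).map Nat.succ := List.range_succ_eq_map (n := n)
    have key : pathLen d (g 0 :: (List.range (n + 1)).map (g ∘ Nat.succ))
        = d (g 0) (g 1) + pathLen d ((List.range (n + 1)).map (g ∘ Nat.succ)) := by
      rw [h3]
      simp only [List.map_cons]
      rfl
    rw [key, pathLen_range_map d n (g ∘ Nat.succ), Finset.sum_range_succ']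
    simp only [Function.comp, Nat.succ_eq_add_one]
    rw [add_comm]

lemma zip_all_eq (Q : β → Prop) :
    ∀ σ : List β, (∀ q ∈ σ.zip σ.tail, (Q q.1 ↔ Q q.2)) →
      ∀ a ∈ σ, ∀ b ∈ σ, (Q a ↔ Q b)
  | [], _, a, ha, b, hb => absurd ha List.not_mem_nil
  | [x], _, a, ha, b, hb => by
    rw [List.mem_singleton.1 ha, List.mem_singleton.1 hb]
  | x :: y :: t, h, a, ha, b, hb => by
    have hxy : Q x ↔ Q y := h (x, y) (by simp [List.zip_cons_cons])
    have htail : ∀ q ∈ (y :: t).zip t, (Q q.1 ↔ Q q.2) := by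
      intro q hq
      exact h q (by simp [List.zip_cons_cons]; right; exact hq)
    have IH := zip_all_eq Q (y :: t) htail
    have hhead : ∀ a ∈ x :: y :: t, (Q a ↔ Q x) := by
      intro a ha
      rcases List.mem_cons.1 ha with h1 | h1
      · rw [h1]
      · exact (IH a h1 y (by simp)).trans hxy.symm
    exact (hhead a ha).trans (hhead b hb).symm

lemma sum_range_sub_telescope (f : ℕ → ℝ) (a b : ℕ) (hab : a ≤ b) :
    ∑ i ∈ Finset.Ico a b, (f (i + 1) - f i) = f b - f a := by
  induction b with
  | zero => interval_cases a; simp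
  | succ n ih =>
    rcases Nat.lt_or_ge a (n + 1) with h | h
    · rw [Finset.sum_Ico_succ_top (by omega), ih (by omega)]
      ring
    · have : a = n + 1 := by omega
      rw [this]; simp

end glist

section circ
variable (p : ℝ) [hp : Fact (0 < p)]

noncomputable def rep (x : AddCircle p) : ℝ := (AddCircle.equivIco p 0 x : ℝ)

lemma rep_mem (x : AddCircle p) : rep p x ∈ Set.Ico (0:ℝ) p := by
  refine ⟨(AddCircle.equivIco p 0 x).2.1, ?_⟩
  exact lt_of_lt_of_eq (AddCircle.equivIco p 0 x).2.2 (zero_add p)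

lemma rep_nonneg (x : AddCircle p) : 0 ≤ rep p x := (rep_mem p x).1
lemma rep_lt (x : AddCircle p) : rep p x < p := (rep_mem p x).2

lemma coe_rep (x : AddCircle p) : ((rep p x : ℝ) : AddCircle p) = x :=
  (AddCircle.equivIco p 0).symm_apply_apply x

lemma rep_injective : Function.Injective (rep p) := by
  intro x y h
  rw [← coe_rep p x, ← coe_rep p y, h]

lemma norm_coe_of_le {u : ℝ} (h0 : 0 ≤ u) (h1 : u ≤ p) :
    ‖(u : AddCircle p)‖ = min u (p - u) := by
  have hp0 : (0:ℝ) < p := hp.out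
  rcases le_or_gt u (p/2) with h | h
  · rw [min_eq_left (by linarith)]
    have := (AddCircle.norm_coe_eq_abs_iff p (x := u) hp0.ne').2
      (by rw [abs_of_nonneg h0, abs_of_pos hp0]; exact h)
    rw [this, abs_of_nonneg h0]
  · rw [min_eq_right (by linarith)]
    have hcoe : ((u : ℝ) : AddCircle p) = ((u - p : ℝ) : AddCircle p) := by
      have h1 : ((u - p : ℝ) : AddCircle p) = (u : AddCircle p) - (p : AddCircle p) :=
        AddCircle.coe_sub p u p
      have h2 : ((p : ℝ) : AddCircle p) = 0 := AddCircle.coe_period p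
      rw [h1, h2, sub_zero]
    rw [hcoe]
    have := (AddCircle.norm_coe_eq_abs_iff p (x := u - p) hp0.ne').2
      (by rw [abs_of_nonpos (by linarith), abs_of_pos hp0]; linarith)
    rw [this, abs_of_nonpos (by linarith)]
    ring

lemma norm_coe_abs {u : ℝ} (h1 : |u| ≤ p) :
    ‖(u : AddCircle p)‖ = min |u| (p - |u|) := by
  rcases le_or_gt 0 u with h | h
  · rw [abs_of_nonneg h]; exact norm_coe_of_le p h (abs_of_nonneg h ▸ h1)
  · rw [abs_of_neg h]
    rw [← norm_neg, ← AddCircle.coe_neg]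
    exact norm_coe_of_le p (by linarith) (abs_of_neg h ▸ h1)

lemma dist_eq_min (x y : AddCircle p) :
    dist x y = min |rep p x - rep p y| (p - |rep p x - rep p y|) := by
  have hx := rep_mem p x
  have hy := rep_mem p y
  have : x - y = ((rep p x - rep p y : ℝ) : AddCircle p) := by
    have h1 : ((rep p x - rep p y : ℝ) : AddCircle p)
        = ((rep p x : ℝ) : AddCircle p) - ((rep p y : ℝ) : AddCircle p) :=
      AddCircle.coe_sub p _ _
    rw [h1, coe_rep, coe_rep]
  rw [dist_eq_norm, this, norm_coe_abs]
  rw [abs_sub_le_iff]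
  constructor <;> [skip; skip] <;> linarith [hx.1, hx.2, hy.1, hy.2]

end circ

lemma exists_flip (P : ℕ → Prop) : ∀ N : ℕ, ¬(P 0 ↔ P N) → ∃ i < N, ¬(P i ↔ P (i + 1))
  | 0, h => absurd Iff.rfl h
  | (N+1), h => by
    by_cases hN : P 0 ↔ P N
    · exact ⟨N, Nat.lt_succ_self N, fun hh => h (hN.trans hh)⟩
    · obtain ⟨i, hi, hh⟩ := exists_flip P N hN
      exact ⟨i, hi.trans (Nat.lt_succ_self N), hh⟩

section snake
variable (R : ℝ) (hR : 0 < R) [Fact (0 < 2 * R)]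

noncomputable def rho : AddCircle (2 * R) := ((R : ℝ) : AddCircle (2 * R))

include hR

omit hR in
lemma norm_rho2 (hR : 0 < R) : ‖rho R‖ = R := by
  rw [rho, norm_coe_of_le (2 * R) hR.le (by linarith)]
  rw [min_eq_left (by linarith)]

lemma norm_rho : ‖rho R‖ = R := norm_rho2 R hR

lemma rho_ne_zero : rho R ≠ 0 := by
  intro h
  have := norm_rho R hR
  rw [h, norm_zero] at this
  exact hR.ne this

lemma dist_self_add_rho (z : AddCircle (2 * R)) : dist z (z + rho R) = R := by
  rw [dist_eq_norm]
  have : z - (z + rho R) = -(rho R) := by abel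
  rw [this, norm_neg, norm_rho R hR]

lemma snake_helper (T : LinearOrder (AddCircle (2 * R))) (ε : ℝ) (hε : 0 < ε)
    (a c : AddCircle (2 * R)) (hac : a ≠ c) (had : a ≠ c + rho R)
    (h1 : T.lt a (a + rho R)) (h2 : T.lt (c + rho R) c) (hd : dist a c < ε) :
    ∃ x1 x2 x3 p q : AddCircle (2 * R),
      T.lt x1 x2 ∧ T.lt x2 x3 ∧
      dist p q = R ∧ dist x1 p < ε ∧ dist x3 p < ε ∧ dist x2 q < ε := by
  letI := T
  have hpq : dist a (a + rho R) = R := dist_self_add_rho R hR a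
  have hd2 : dist (c + rho R) (a + rho R) < ε := by
    rw [dist_add_right, dist_comm]; exact hd
  rcases lt_trichotomy (a + rho R) (c + rho R) with hBD | hBD | hBD
  · -- a < a+ρ < c+ρ < c : snake (a, a+ρ, c)
    refine ⟨a, a + rho R, c, a, a + rho R, h1, hBD.trans h2, hpq, by simpa using hε, ?_, ?_⟩
    · rw [dist_comm]; exact hd
    · simpa using hε
  · exact absurd (add_right_cancel hBD) hac
  · rcases lt_trichotomy a (c + rho R) with hAD | hAD | hAD
    · -- a < c+ρ < c : snake (a, c+ρ, c)
      exact ⟨a, c + rho R, c, a, a + rho R, hAD, h2, hpq, by simpa using hε,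
        by rw [dist_comm]; exact hd, hd2⟩
    · exact absurd hAD had
    · -- c+ρ < a < a+ρ : snake (c+ρ, a, a+ρ)
      refine ⟨c + rho R, a, a + rho R, a + rho R, a, hAD, h1, by rw [dist_comm]; exact hpq,
        hd2, by simpa using hε, by simpa using hε⟩

lemma snake_main (T : LinearOrder (AddCircle (2 * R))) (ε : ℝ) (hε : 0 < ε) :
    ∃ x1 x2 x3 p q : AddCircle (2 * R),
      T.lt x1 x2 ∧ T.lt x2 x3 ∧
      dist p q = R ∧ dist x1 p < ε ∧ dist x3 p < ε ∧ dist x2 q < ε := by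
  letI := T
  obtain ⟨N, hN2, hNR⟩ : ∃ N : ℕ, 2 ≤ N ∧ R / ε < N :=
    ⟨⌈R / ε⌉₊ + 2, by omega, by
      have := Nat.le_ceil (R / ε)
      push_cast
      linarith⟩
  have hN0 : (0:ℝ) < N := by positivity
  set h : ℝ := R / N with hh
  have hh0 : 0 < h := div_pos hR hN0
  have hhR2 : h ≤ R / 2 := by
    rw [hh, div_le_div_iff₀ hN0 two_pos]
    have : (2:ℝ) ≤ N := by exact_mod_cast hN2
    nlinarith
  have hhε : h < ε := by
    rw [hh, div_lt_iff₀ hN0]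
    calc R = (R / ε) * ε := by field_simp
    _ < N * ε := by
      apply mul_lt_mul_of_pos_right hNR hε
    _ = ε * N := mul_comm _ _
  have hcoe_dist : ∀ a b : ℝ, |a - b| ≤ 2 * R →
      dist ((a : ℝ) : AddCircle (2 * R)) ((b : ℝ) : AddCircle (2 * R))
        = min |a - b| (2 * R - |a - b|) := by
    intro a b hab
    have h1 : ((a : ℝ) : AddCircle (2 * R)) - ((b : ℝ) : AddCircle (2 * R))
        = ((a - b : ℝ) : AddCircle (2 * R)) := (AddCircle.coe_sub _ a b).symm
    rw [dist_eq_norm, h1, norm_coe_abs (2 * R) hab]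
  set u : ℕ → AddCircle (2 * R) := fun i => ((i * h : ℝ) : AddCircle (2 * R)) with hu
  have hcoe_add : ∀ i : ℕ, u i + rho R = (((i : ℝ) * h + R : ℝ) : AddCircle (2 * R)) := by
    intro i
    rw [hu]
    exact (AddCircle.coe_add (2 * R) _ _).symm
  have hdist_uu : ∀ i : ℕ, dist (u i) (u (i + 1)) = h := by
    intro i
    rw [hu]
    have e0 : (i : ℝ) * h - (((i : ℕ) + 1 : ℕ) : ℝ) * h = -h := by push_cast; ring
    have e1 : |(i : ℝ) * h - (((i : ℕ) + 1 : ℕ) : ℝ) * h| = h := by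
      rw [e0, abs_neg, abs_of_nonneg hh0.le]
    rw [hcoe_dist _ _ (by rw [e1]; linarith), e1, min_eq_left (by linarith)]
  have hdist1 : ∀ i : ℕ, dist (u i) (u (i + 1) + rho R) = R - h := by
    intro i
    rw [hcoe_add (i + 1), hu]
    have e0 : (i : ℝ) * h - ((((i : ℕ) + 1 : ℕ) : ℝ) * h + R) = -(h + R) := by push_cast; ring
    have e1 : |(i : ℝ) * h - ((((i : ℕ) + 1 : ℕ) : ℝ) * h + R)| = h + R := by
      rw [e0, abs_neg, abs_of_nonneg (by linarith)]
    rw [hcoe_dist _ _ (by rw [e1]; linarith), e1, min_eq_right (by linarith)]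
    ring
  have hdist2 : ∀ i : ℕ, dist (u (i + 1)) (u i + rho R) = R - h := by
    intro i
    rw [hcoe_add i, hu]
    have e0 : ((((i : ℕ) + 1 : ℕ) : ℝ)) * h - ((i : ℝ) * h + R) = h - R := by push_cast; ring
    have e1 : |((((i : ℕ) + 1 : ℕ) : ℝ)) * h - ((i : ℝ) * h + R)| = R - h := by
      rw [e0, abs_of_nonpos (by linarith)]; ring
    rw [hcoe_dist _ _ (by rw [e1]; linarith), e1, min_eq_left (by linarith)]
  set s : ℕ → Prop := fun i => T.lt (u i) (u i + rho R) with hs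
  have hu0 : u 0 = 0 := by
    rw [hu]; push_cast; rw [zero_mul]; exact (QuotientAddGroup.mk_zero _)
  have hNne : (N : ℝ) ≠ 0 := hN0.ne'
  have huN : u N = rho R := by
    have e : (N : ℝ) * h = R := by rw [hh]; field_simp
    rw [hu, rho]
    exact congrArg (fun t : ℝ => ((t : ℝ) : AddCircle (2 * R))) e
  have huNrho : u N + rho R = 0 := by
    rw [huN, rho]
    have h1 : ((R : ℝ) : AddCircle (2 * R)) + ((R : ℝ) : AddCircle (2 * R))
        = ((R + R : ℝ) : AddCircle (2 * R)) := (AddCircle.coe_add (2 * R) R R).symm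
    rw [h1]
    have h2 : (R + R : ℝ) = 2 * R := by ring
    rw [h2]
    exact AddCircle.coe_period (2 * R)
  have hs0 : s 0 ↔ T.lt 0 (rho R) := by
    simp only [hs]; rw [hu0, zero_add]
  have hsN : s N ↔ T.lt (rho R) 0 := by
    simp only [hs]; rw [huNrho, huN]
  have hflip0N : ¬(s 0 ↔ s N) := by
    intro hiff
    have hiff2 : T.lt 0 (rho R) ↔ T.lt (rho R) 0 := (hs0.symm.trans hiff).trans hsN
    by_cases h0 : T.lt 0 (rho R)
    · exact lt_asymm h0 (hiff2.1 h0)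
    · rcases lt_trichotomy (0 : AddCircle (2 * R)) (rho R) with ht | ht | ht
      · exact h0 ht
      · exact rho_ne_zero R hR ht.symm
      · exact h0 (hiff2.2 ht)
  obtain ⟨i, hiN, hflip⟩ := exists_flip s N hflip0N
  have hne_uu : u i ≠ u (i + 1) := by
    rw [← dist_pos, hdist_uu i]; exact hh0
  by_cases hsi : s i
  · have hsi1 : ¬ s (i + 1) := fun hh => hflip ⟨fun _ => hh, fun _ => hsi⟩
    have h2 : T.lt (u (i + 1) + rho R) (u (i + 1)) := by
      rcases lt_trichotomy (u (i + 1)) (u (i + 1) + rho R) with ht | ht | ht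
      · exact absurd ht hsi1
      · exact absurd (left_eq_add.1 ht) (rho_ne_zero R hR)
      · exact ht
    have had : u i ≠ u (i + 1) + rho R := by
      rw [← dist_pos, hdist1 i]; linarith
    exact snake_helper R hR T ε hε (u i) (u (i + 1)) hne_uu had hsi h2
      (by rw [hdist_uu i]; exact hhε)
  · have hsi1 : s (i + 1) := by
      by_contra hh
      exact hflip ⟨fun h => absurd h hsi, fun h => absurd h hh⟩
    have h2 : T.lt (u i + rho R) (u i) := by
      rcases lt_trichotomy (u i) (u i + rho R) with ht | ht | ht
      · exact absurd ht hsi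
      · exact absurd (left_eq_add.1 ht) (rho_ne_zero R hR)
      · exact ht
    have had : u (i + 1) ≠ u i + rho R := by
      rw [← dist_pos, hdist2 i]; linarith
    exact snake_helper R hR T ε hε (u (i + 1)) (u i) hne_uu.symm had hsi1 h2
      (by rw [dist_comm, hdist_uu i]; exact hhε)

end snake

section lower
variable (R : ℝ) (hR : 0 < R) [Fact (0 < 2 * R)]

lemma lord_sort_eq (T : LinearOrder (AddCircle (2 * R))) (X : Finset (AddCircle (2 * R))) :
    lord dist T X = pathLen dist (X.sort T.le) := by
  letI := T
  refine lord_eq_of T (X.sort_nodup _) ?_ (X.sortedLT_sort).pairwise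
  exact toFinset_eq_of_forall fun a => Finset.mem_sort T.le

lemma lord_nonneg' (T : LinearOrder (AddCircle (2 * R))) (X : Finset (AddCircle (2 * R))) :
    0 ≤ lord dist T X := by
  rw [lord_sort_eq R T X]; exact pathLen_nonneg _

lemma ORdset_le (T : LinearOrder (AddCircle (2 * R))) (k : ℕ) :
    ∀ r ∈ {r : ℝ | ∃ X : Finset (AddCircle (2 * R)),
      2 ≤ X.card ∧ X.card ≤ k + 1 ∧ r = lord dist T X / lopt dist X}, r ≤ (k : ℝ) := by
  rintro r ⟨X, hc2, hck, rfl⟩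
  letI := T
  have hpos := lopt_pos hc2
  have hlord : lord dist T X ≤ (k : ℝ) * lopt dist X := by
    rw [lord_sort_eq R T X]
    have hlen : (X.sort T.le).length = X.card := X.length_sort _
    have := pathLen_le_of_mem (l := X.sort T.le) (c := lopt dist X) (lopt_nonneg X)
      (fun a ha b hb => dist_le_lopt
        ((Finset.mem_sort T.le).1 ha) ((Finset.mem_sort T.le).1 hb))
    refine this.trans ?_
    have hle : ((X.sort T.le).length - 1 : ℕ) ≤ k := by omega
    exact mul_le_mul_of_nonneg_right (by exact_mod_cast hle) (lopt_nonneg X)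
  rw [div_le_iff₀ hpos]
  exact hlord

lemma ORdset_bdd (T : LinearOrder (AddCircle (2 * R))) (k : ℕ) :
    BddAbove {r : ℝ | ∃ X : Finset (AddCircle (2 * R)),
      2 ≤ X.card ∧ X.card ≤ k + 1 ∧ r = lord dist T X / lopt dist X} :=
  ⟨(k : ℝ), fun r hr => ORdset_le R T k r hr⟩

include hR

lemma ORd_nonneg (T : LinearOrder (AddCircle (2 * R))) (k : ℕ) (hk : 1 ≤ k) :
    0 ≤ ORd (fun x y : AddCircle (2 * R) => dist x y) T k := by
  have hne : (0 : AddCircle (2 * R)) ≠ rho R := (rho_ne_zero R hR).symm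
  have hmem : lord dist T {0, rho R} / lopt dist {0, rho R} ∈
      {r : ℝ | ∃ X : Finset (AddCircle (2 * R)),
        2 ≤ X.card ∧ X.card ≤ k + 1 ∧ r = lord dist T X / lopt dist X} :=
    ⟨{0, rho R}, by rw [Finset.card_pair hne], by rw [Finset.card_pair hne]; omega, rfl⟩
  refine le_trans ?_ (le_csSup (ORdset_bdd R T k) hmem)
  exact div_nonneg (lord_nonneg' R T _) (lopt_nonneg _)

lemma ORd_ge_two (T : LinearOrder (AddCircle (2 * R))) (k : ℕ) (hk : 2 ≤ k) :
    2 ≤ ORd (fun x y : AddCircle (2 * R) => dist x y) T k := by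
  letI := T
  by_contra hcon
  push_neg at hcon
  set A := ORd (fun x y : AddCircle (2 * R) => dist x y) T k with hA
  have hA0 : 0 ≤ A := ORd_nonneg R hR T k (by omega)
  set δ : ℝ := 2 - A with hδ
  have hδ0 : 0 < δ := by rw [hδ]; linarith
  have hδ2 : δ ≤ 2 := by rw [hδ]; linarith
  set ε : ℝ := min (δ * R / 13) (R / 3) with hε
  have hε0 : 0 < ε := lt_min (by positivity) (by positivity)
  have hε1 : ε ≤ δ * R / 13 := min_le_left _ _
  have hε2 : ε ≤ R / 3 := min_le_right _ _
  obtain ⟨x1, x2, x3, pp, qq, h12, h23, hpq, h1p, h3p, h2q⟩ := snake_main R hR T ε hε0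
  have h13 : T.lt x1 x3 := h12.trans h23
  have ne12 : x1 ≠ x2 := ne_of_lt h12
  have ne23 : x2 ≠ x3 := ne_of_lt h23
  have ne13 : x1 ≠ x3 := ne_of_lt h13
  set X : Finset (AddCircle (2 * R)) := {x1, x2, x3} with hX
  have hcard : X.card = 3 := by
    rw [hX, Finset.card_insert_of_notMem (by simp [ne12, ne13]),
      Finset.card_pair ne23]
  have hlord : lord dist T X = dist x1 x2 + dist x2 x3 := by
    have hnd : ([x1, x2, x3] : List (AddCircle (2 * R))).Nodup := by
      simp [ne12, ne13, ne23]
    have htf : ∀ a, a ∈ ([x1, x2, x3] : List (AddCircle (2 * R))) ↔ a ∈ X := by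
      intro a
      rw [hX]
      simp only [List.mem_cons, List.not_mem_nil, or_false, Finset.mem_insert,
        Finset.mem_singleton]
    have hsrt : List.Pairwise T.lt [x1, x2, x3] := by
      refine List.pairwise_cons.2 ⟨?_, List.pairwise_cons.2 ⟨?_, List.pairwise_singleton _ _⟩⟩
      · intro b hb
        rcases List.mem_cons.1 hb with h | h
        · rw [h]; exact h12
        · rw [List.mem_singleton.1 h]; exact h13
      · intro b hb
        rw [List.mem_singleton.1 hb]; exact h23
    have := lord_eq_of (X := X) T hnd (toFinset_eq_of_forall htf) hsrt
    rw [this]; simp [pathLen]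
  have hlopt_le : lopt dist X ≤ R + 4 * ε := by
    have htf2 : ∀ a, a ∈ ([x2, x1, x3] : List (AddCircle (2 * R))) ↔ a ∈ X := by
      intro a
      rw [hX]
      simp only [List.mem_cons, List.not_mem_nil, or_false, Finset.mem_insert,
        Finset.mem_singleton]
      tauto
    have hle := lopt_le (X := X) (l := [x2, x1, x3])
      (by simp [ne12.symm, ne23, ne13])
      (toFinset_eq_of_forall htf2)
    have hpl : pathLen dist [x2, x1, x3] = dist x2 x1 + dist x1 x3 := by simp [pathLen]
    have hb1 : dist x2 x1 ≤ R + 2 * ε := by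
      have := dist_triangle4 x2 qq pp x1
      rw [dist_comm qq pp, hpq] at this
      have e1 : dist pp x1 = dist x1 pp := dist_comm _ _
      linarith [this, e1 ▸ h1p]
    have hb2 : dist x1 x3 ≤ 2 * ε := by
      have := dist_triangle x1 pp x3
      have e1 : dist pp x3 = dist x3 pp := dist_comm _ _
      linarith [this, e1 ▸ h3p]
    linarith [hle, hpl ▸ hle]
  have hlopt_pos : 0 < lopt dist X := lopt_pos (by omega)
  have hlord_ge : 2 * R - 4 * ε ≤ lord dist T X := by
    rw [hlord]
    have hb1 : R - 2 * ε ≤ dist x1 x2 := by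
      have := dist_triangle4 pp x1 x2 qq
      rw [hpq] at this
      have e1 : dist pp x1 = dist x1 pp := dist_comm _ _
      linarith [this, e1 ▸ h1p]
    have hb2 : R - 2 * ε ≤ dist x2 x3 := by
      have := dist_triangle4 qq x2 x3 pp
      rw [dist_comm qq pp] at this
      rw [hpq] at this
      have e1 : dist qq x2 = dist x2 qq := dist_comm _ _
      have e2 : dist x3 pp = dist x3 pp := rfl
      linarith [this, e1 ▸ h2q]
    linarith
  have hmem : lord dist T X / lopt dist X ∈
      {r : ℝ | ∃ X : Finset (AddCircle (2 * R)),
        2 ≤ X.card ∧ X.card ≤ k + 1 ∧ r = lord dist T X / lopt dist X} :=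
    ⟨X, by omega, by omega, rfl⟩
  have hAge : lord dist T X / lopt dist X ≤ A := le_csSup (ORdset_bdd R T k) hmem
  have hratio : (2 * R - 4 * ε) / (R + 4 * ε) ≤ lord dist T X / lopt dist X := by
    have h1 : (2 * R - 4 * ε) / (R + 4 * ε) ≤ (2 * R - 4 * ε) / lopt dist X := by
      apply div_le_div_of_nonneg_left (by linarith) hlopt_pos hlopt_le
    have h2 : (2 * R - 4 * ε) / lopt dist X ≤ lord dist T X / lopt dist X :=
      (div_le_div_iff_of_pos_right hlopt_pos).2 hlord_ge
    linarith
  have hgt : A < (2 * R - 4 * ε) / (R + 4 * ε) := by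
    rw [lt_div_iff₀ (by linarith)]
    have : A = 2 - δ := by rw [hδ]; ring
    rw [this]
    nlinarith
  linarith
end lower

noncomputable def dl (p x y : ℝ) : ℝ := min |x - y| (p - |x - y|)

noncomputable def gapf (p : ℝ) (c : ℕ → ℝ) (m i : ℕ) : ℝ :=
  if i + 1 < m then c (i + 1) - c i else p - c (m - 1) + c 0

noncomputable def covf (p : ℝ) (c : ℕ → ℝ) (m u v : ℕ) : Finset ℕ :=
  if c (max u v) - c (min u v) ≤ p - (c (max u v) - c (min u v)) then
    (Finset.range (m - 1)).filter (fun i => min u v ≤ i ∧ i + 1 ≤ max u v)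
  else
    insert (m - 1) ((Finset.range (m - 1)).filter (fun i => i + 1 ≤ min u v ∨ max u v ≤ i))

section core
variable {p : ℝ} {m : ℕ} {c : ℕ → ℝ}

lemma cmono_le (hmono : ∀ i j, i < j → j < m → c i < c j) :
    ∀ i j, i ≤ j → j < m → c i ≤ c j := by
  intro i j hij hj
  rcases Nat.lt_or_ge i j with h | h
  · exact (hmono i j h hj).le
  · have : i = j := by omega
    rw [this]

variable (hp : 0 < p) (hm : 2 ≤ m)
  (hmono : ∀ i j, i < j → j < m → c i < c j)
  (h0 : 0 ≤ c 0) (hlast : c (m - 1) < p)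

include hp hm hmono h0 hlast

lemma gap_nonneg (i : ℕ) : 0 ≤ gapf p c m i := by
  unfold gapf
  split_ifs with h
  · linarith [hmono i (i + 1) (Nat.lt_succ_self i) h]
  · have : c 0 ≤ c (m - 1) := cmono_le hmono 0 (m - 1) (by omega) (by omega)
    linarith

lemma gap_le_p (i : ℕ) : gapf p c m i ≤ p := by
  unfold gapf
  split_ifs with h
  · have h1 : c (i + 1) ≤ c (m - 1) := cmono_le hmono (i + 1) (m - 1) (by omega) (by omega)
    have h2 : c 0 ≤ c i := cmono_le hmono 0 i (by omega) (by omega)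
    linarith
  · have : c 0 ≤ c (m - 1) := cmono_le hmono 0 (m - 1) (by omega) (by omega)
    linarith

lemma gap_total : ∑ i ∈ Finset.range m, gapf p c m i = p := by
  obtain ⟨n, rfl⟩ : ∃ n, m = n + 1 := ⟨m - 1, by omega⟩
  rw [Finset.sum_range_succ]
  have h1 : ∀ i ∈ Finset.range n, gapf p c (n + 1) i = c (i + 1) - c i := by
    intro i hi
    rw [Finset.mem_range] at hi
    exact if_pos (by omega)
  rw [Finset.sum_congr rfl h1, Finset.sum_range_sub c n]
  have h3 : gapf p c (n + 1) n = p - c n + c 0 := by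
    unfold gapf
    rw [if_neg (by omega)]
    norm_num
  rw [h3]
  ring

lemma cov_sum_le (u v : ℕ) (hu : u < m) (hv : v < m) :
    ∑ i ∈ covf p c m u v, gapf p c m i ≤ dl p (c u) (c v) := by
  set a := min u v with ha
  set b := max u v with hb
  have hab : a ≤ b := min_le_max
  have hbm : b < m := by omega
  have ham : a < m := by omega
  have habs : |c u - c v| = c b - c a := by
    rcases le_total u v with h | h
    · have h1 : a = u := by omega
      have h2 : b = v := by omega
      rw [h1, h2, abs_sub_comm, abs_of_nonneg (by linarith [cmono_le hmono u v h hv])]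
    · have h1 : a = v := by omega
      have h2 : b = u := by omega
      rw [h1, h2, abs_of_nonneg (by linarith [cmono_le hmono v u h hu])]
  rw [dl, habs]
  unfold covf
  rw [← ha, ← hb]
  split_ifs with hside
  · rw [min_eq_left hside]
    have hsub : (Finset.range (m - 1)).filter (fun i => a ≤ i ∧ i + 1 ≤ b) ⊆ Finset.Ico a b := by
      intro i hi
      simp only [Finset.mem_filter, Finset.mem_range] at hi
      simp only [Finset.mem_Ico]
      omega
    have h1 : ∑ i ∈ (Finset.range (m - 1)).filter (fun i => a ≤ i ∧ i + 1 ≤ b), gapf p c m i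
        ≤ ∑ i ∈ Finset.Ico a b, gapf p c m i :=
      Finset.sum_le_sum_of_subset_of_nonneg hsub
        (fun i _ _ => gap_nonneg hp hm hmono h0 hlast i)
    have h2 : ∑ i ∈ Finset.Ico a b, gapf p c m i = ∑ i ∈ Finset.Ico a b, (c (i + 1) - c i) := by
      apply Finset.sum_congr rfl
      intro i hi
      simp only [Finset.mem_Ico] at hi
      exact if_pos (by omega)
    rw [h2, sum_range_sub_telescope c a b hab] at h1
    exact h1
  · rw [min_eq_right (by linarith [not_le.1 hside])]
    have hnotmem : m - 1 ∉ (Finset.range (m - 1)).filter (fun i => i + 1 ≤ a ∨ b ≤ i) := by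
      intro h
      simp only [Finset.mem_filter, Finset.mem_range] at h
      omega
    rw [Finset.sum_insert hnotmem]
    have hsplit : (Finset.range (m - 1)).filter (fun i => i + 1 ≤ a ∨ b ≤ i)
        = Finset.range a ∪ Finset.Ico b (m - 1) := by
      ext i
      simp only [Finset.mem_filter, Finset.mem_range, Finset.mem_union, Finset.mem_Ico]
      omega
    have hdisj : Disjoint (Finset.range a) (Finset.Ico b (m - 1)) := by
      rw [Finset.disjoint_left]
      intro i h1 h2
      simp only [Finset.mem_range] at h1
      simp only [Finset.mem_Ico] at h2
      omega
    rw [hsplit, Finset.sum_union hdisj]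
    have hs1 : ∑ i ∈ Finset.range a, gapf p c m i = c a - c 0 := by
      rw [Finset.sum_congr rfl (fun i hi => ?_), Finset.sum_range_sub c a]
      rw [Finset.mem_range] at hi
      exact if_pos (by omega)
    have hs2 : ∑ i ∈ Finset.Ico b (m - 1), gapf p c m i = c (m - 1) - c b := by
      rw [Finset.sum_congr rfl (fun i hi => ?_), sum_range_sub_telescope c b (m - 1) (by omega)]
      rw [Finset.mem_Ico] at hi
      exact if_pos (by omega)
    have hw : gapf p c m (m - 1) = p - c (m - 1) + c 0 := by
      unfold gapf
      rw [if_neg (by omega)]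
    rw [hs1, hs2, hw]
    ring_nf
    linarith [le_refl (0:ℝ)]

lemma covered_sum_le (P : List (ℕ × ℕ)) (hP : ∀ q ∈ P, q.1 < m ∧ q.2 < m) :
    ∑ i ∈ (Finset.range m).filter (fun i => ∃ q ∈ P, i ∈ covf p c m q.1 q.2), gapf p c m i
      ≤ (P.map (fun q => dl p (c q.1) (c q.2))).sum := by
  induction P with
  | nil => simp
  | cons q P' ih =>
    have hq := hP q (List.mem_cons_self (a := q) (l := P'))
    have hP' : ∀ r ∈ P', r.1 < m ∧ r.2 < m := fun r hr => hP r (List.mem_cons_of_mem q hr)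
    have hsetsplit : (Finset.range m).filter (fun i => ∃ r ∈ q :: P', i ∈ covf p c m r.1 r.2)
        = ((Finset.range m).filter (fun i => i ∈ covf p c m q.1 q.2))
          ∪ ((Finset.range m).filter (fun i => ∃ r ∈ P', i ∈ covf p c m r.1 r.2)) := by
      ext i
      simp only [Finset.mem_filter, Finset.mem_union, List.mem_cons]
      constructor
      · rintro ⟨him, r, hr | hr, hcov⟩
        · left; exact ⟨him, hr ▸ hcov⟩
        · right; exact ⟨him, r, hr, hcov⟩
      · rintro (⟨him, hcov⟩ | ⟨him, r, hr, hcov⟩)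
        · exact ⟨him, q, Or.inl rfl, hcov⟩
        · exact ⟨him, r, Or.inr hr, hcov⟩
    rw [hsetsplit, List.map_cons, List.sum_cons]
    set A := (Finset.range m).filter (fun i => i ∈ covf p c m q.1 q.2) with hA
    set B := (Finset.range m).filter (fun i => ∃ r ∈ P', i ∈ covf p c m r.1 r.2) with hB
    have hui := Finset.sum_union_inter (s₁ := A) (s₂ := B) (f := gapf p c m)
    have hinter : 0 ≤ ∑ i ∈ A ∩ B, gapf p c m i :=
      Finset.sum_nonneg fun i _ => gap_nonneg hp hm hmono h0 hlast i
    have hAle : ∑ i ∈ A, gapf p c m i ≤ dl p (c q.1) (c q.2) := by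
      refine le_trans (Finset.sum_le_sum_of_subset_of_nonneg
        (fun i hi => (Finset.mem_filter.1 hi).2)
        (fun i _ _ => gap_nonneg hp hm hmono h0 hlast i)) ?_
      exact cov_sum_le hp hm hmono h0 hlast q.1 q.2 hq.1 hq.2
    have hBle := ih hP'
    linarith

omit hp hm hmono h0 hlast in
lemma step_side (hm2 : 2 ≤ m) (u v : ℕ) (hu : u < m) (hv : v < m) (i j : ℕ) (hij : i < j)
    (hjm : j ≤ m - 1)
    (hiu : i ∉ covf p c m u v) (hju : j ∉ covf p c m u v) :
    ((i + 1 ≤ u ∧ u ≤ j) ↔ (i + 1 ≤ v ∧ v ≤ j)) := by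
  unfold covf at hiu hju
  split_ifs at hiu hju with hside
  · simp only [Finset.mem_filter, Finset.mem_range, not_and, not_le] at hiu hju
    omega
  · simp only [Finset.mem_insert, Finset.mem_filter, Finset.mem_range, not_or, not_and,
      not_le] at hiu hju
    omega

lemma core_ineq (σ : List ℕ) (htf : σ.toFinset = Finset.range m) :
    ∑ i ∈ Finset.range (m - 1), dl p (c i) (c (i + 1))
      ≤ 2 * pathLen (fun a b => dl p (c a) (c b)) σ := by
  classical
  set P := σ.zip σ.tail with hPdef
  have hmemσ : ∀ x ∈ σ, x < m := by
    intro x hx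
    have : x ∈ σ.toFinset := List.mem_toFinset.2 hx
    rw [htf, Finset.mem_range] at this
    exact this
  have hmemσ' : ∀ x < m, x ∈ σ := by
    intro x hx
    have : x ∈ σ.toFinset := by rw [htf, Finset.mem_range]; exact hx
    exact List.mem_toFinset.1 this
  have hP : ∀ q ∈ P, q.1 < m ∧ q.2 < m := by
    intro q hq
    obtain ⟨h1, h2⟩ := List.of_mem_zip hq
    exact ⟨hmemσ _ h1, hmemσ _ (List.mem_of_mem_tail h2)⟩
  have hS : pathLen (fun a b => dl p (c a) (c b)) σ
      = (P.map (fun q => dl p (c q.1) (c q.2))).sum := pathLen_eq_zip _ σ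
  have hcovered := covered_sum_le hp hm hmono h0 hlast P hP
  -- pointwise facts about LHS terms
  have hdl_eq : ∀ i ∈ Finset.range (m - 1),
      dl p (c i) (c (i + 1)) = min (gapf p c m i) (p - gapf p c m i) := by
    intro i hi
    rw [Finset.mem_range] at hi
    have hgap : gapf p c m i = c (i + 1) - c i := if_pos (by omega)
    have hc : c i ≤ c (i + 1) := (hmono i (i + 1) (Nat.lt_succ_self i) (by omega)).le
    rw [dl, hgap, abs_sub_comm, abs_of_nonneg (by linarith)]
  have htel : ∑ i ∈ Finset.range (m - 1), gapf p c m i = c (m - 1) - c 0 := by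
    rw [Finset.sum_congr rfl (fun i hi => ?_), Finset.sum_range_sub c (m - 1)]
    rw [Finset.mem_range] at hi
    exact if_pos (by omega)
  have hLHS1 : ∑ i ∈ Finset.range (m - 1), dl p (c i) (c (i + 1)) ≤ c (m - 1) - c 0 := by
    rw [← htel]
    apply Finset.sum_le_sum
    intro i hi
    rw [hdl_eq i hi]
    exact min_le_left _ _
  by_cases hall : ∀ i ∈ Finset.range m, ∃ q ∈ P, i ∈ covf p c m q.1 q.2
  · have heq : (Finset.range m).filter (fun i => ∃ q ∈ P, i ∈ covf p c m q.1 q.2)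
        = Finset.range m := Finset.filter_true_of_mem hall
    rw [heq, gap_total hp hm hmono h0 hlast] at hcovered
    rw [hS]
    linarith
  · push_neg at hall
    obtain ⟨j, hjm, hjunc⟩ := hall
    rw [Finset.mem_range] at hjm
    -- every other gap is covered
    have huniq : ∀ i < m, i ≠ j → ∃ q ∈ P, i ∈ covf p c m q.1 q.2 := by
      intro i him hinej
      by_contra hiunc
      push_neg at hiunc
      -- two uncovered gaps i ≠ j : contradiction
      obtain ⟨i', j', hij', hj'm, hi'unc, hj'unc⟩ :
          ∃ i' j', i' < j' ∧ j' ≤ m - 1 ∧ (∀ q ∈ P, i' ∉ covf p c m q.1 q.2)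
            ∧ (∀ q ∈ P, j' ∉ covf p c m q.1 q.2) := by
        rcases Nat.lt_or_ge i j with h | h
        · exact ⟨i, j, h, by omega, hiunc, hjunc⟩
        · exact ⟨j, i, by omega, by omega, hjunc, hiunc⟩
      set Q : ℕ → Prop := fun u => i' + 1 ≤ u ∧ u ≤ j' with hQ
      have hstep : ∀ q ∈ P, (Q q.1 ↔ Q q.2) := by
        intro q hq
        exact step_side hm q.1 q.2 (hP q hq).1 (hP q hq).2 i' j' hij' hj'm
          (hi'unc q hq) (hj'unc q hq)
      have hall_eq := zip_all_eq Q σ hstep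
      have hQj' : Q j' := ⟨by omega, le_refl _⟩
      set w : ℕ := if j' = m - 1 then 0 else j' + 1 with hw
      have hwm : w < m := by rw [hw]; split_ifs <;> omega
      have hQw : ¬ Q w := by
        rw [hw, hQ]
        split_ifs with h
        · simp
        · simp only [not_and, not_le]
          omega
      exact hQw ((hall_eq w (hmemσ' w hwm) j' (hmemσ' j' (by omega))).2 hQj')
    have hsub : (Finset.range m).erase j
        ⊆ (Finset.range m).filter (fun i => ∃ q ∈ P, i ∈ covf p c m q.1 q.2) := by
      intro i hi
      rw [Finset.mem_erase, Finset.mem_range] at hi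
      rw [Finset.mem_filter, Finset.mem_range]
      exact ⟨hi.2, huniq i hi.2 hi.1⟩
    have hSge : p - gapf p c m j ≤ (P.map (fun q => dl p (c q.1) (c q.2))).sum := by
      have h1 : ∑ i ∈ (Finset.range m).erase j, gapf p c m i
          ≤ ∑ i ∈ (Finset.range m).filter (fun i => ∃ q ∈ P, i ∈ covf p c m q.1 q.2),
              gapf p c m i :=
        Finset.sum_le_sum_of_subset_of_nonneg hsub
          (fun i _ _ => gap_nonneg hp hm hmono h0 hlast i)
      have h2 : ∑ i ∈ (Finset.range m).erase j, gapf p c m i + gapf p c m j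
          = ∑ i ∈ Finset.range m, gapf p c m i :=
        Finset.sum_erase_add _ _ (Finset.mem_range.2 hjm)
      rw [gap_total hp hm hmono h0 hlast] at h2
      linarith
    have hgj_le := gap_le_p hp hm hmono h0 hlast j
    rw [hS]
    rcases Nat.lt_or_ge j (m - 1) with hjlt | hjge
    · -- internal uncovered gap
      have hLHS2 : ∑ i ∈ Finset.range (m - 1), dl p (c i) (c (i + 1))
          ≤ (c (m - 1) - c 0) - gapf p c m j + min (gapf p c m j) (p - gapf p c m j) := by
        have hjmem : j ∈ Finset.range (m - 1) := Finset.mem_range.2 hjlt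
        have hsplitL : ∑ i ∈ Finset.range (m - 1), dl p (c i) (c (i + 1))
            = ∑ i ∈ (Finset.range (m - 1)).erase j, dl p (c i) (c (i + 1))
              + dl p (c j) (c (j + 1)) :=
          (Finset.sum_erase_add _ _ hjmem).symm
        have hsplitG : ∑ i ∈ (Finset.range (m - 1)).erase j, gapf p c m i + gapf p c m j
            = ∑ i ∈ Finset.range (m - 1), gapf p c m i :=
          Finset.sum_erase_add _ _ hjmem
        have hterm : ∑ i ∈ (Finset.range (m - 1)).erase j, dl p (c i) (c (i + 1))
            ≤ ∑ i ∈ (Finset.range (m - 1)).erase j, gapf p c m i := by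
          apply Finset.sum_le_sum
          intro i hi
          rw [hdl_eq i (Finset.mem_of_mem_erase hi)]
          exact min_le_left _ _
        have hj_eq := hdl_eq j hjmem
        rw [hsplitL, hj_eq]
        rw [htel] at hsplitG
        linarith
      rcases le_or_gt (gapf p c m j) (p - gapf p c m j) with hcase | hcase
      · rw [min_eq_left hcase] at hLHS2
        linarith
      · rw [min_eq_right hcase.le] at hLHS2
        linarith
    · -- wrap gap uncovered : j = m - 1
      have hj_eq : j = m - 1 := by omega
      have hgw : gapf p c m j = p - c (m - 1) + c 0 := by
        rw [hj_eq]
        unfold gapf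
        rw [if_neg (by omega)]
      linarith

end core

section good
variable (R : ℝ) (hR : 0 < R) [Fact (0 < 2 * R)]

noncomputable def Tg : LinearOrder (AddCircle (2 * R)) :=
  LinearOrder.lift' (rep (2 * R)) (rep_injective (2 * R))

lemma Tg_lt_iff {x y : AddCircle (2 * R)} :
    (Tg R).lt x y ↔ rep (2 * R) x < rep (2 * R) y := Iff.rfl

include hR

lemma lord_le_two_pathLen (X : Finset (AddCircle (2 * R))) (hcard : 2 ≤ X.card)
    (l : List (AddCircle (2 * R))) (hnd : l.Nodup) (htf : ∀ a, a ∈ l ↔ a ∈ X) :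
    lord dist (Tg R) X ≤ 2 * pathLen dist l := by
  classical
  letI := Tg R
  set m := X.card with hmdef
  have hm0 : 0 < m := by omega
  set e : Fin m ≃o {x // x ∈ X} := X.orderIsoOfFin rfl with he
  set g : ℕ → AddCircle (2 * R) :=
    fun i => if h : i < m then (e ⟨i, h⟩ : AddCircle (2 * R))
      else (e ⟨0, hm0⟩ : AddCircle (2 * R)) with hg
  set c : ℕ → ℝ := fun i => rep (2 * R) (g i) with hc
  have hgX : ∀ i, (g i) ∈ X := by
    intro i; rw [hg]; dsimp only; split_ifs; exacts [(e _).2, (e _).2]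
  have hglt : ∀ i j, i < j → j < m → (Tg R).lt (g i) (g j) := by
    intro i j hij hjm
    rw [hg]; dsimp only; rw [dif_pos (by omega : i < m), dif_pos hjm]
    have hlt : (⟨i, by omega⟩ : Fin m) < ⟨j, hjm⟩ := Fin.mk_lt_mk.2 hij
    exact Subtype.coe_lt_coe.2 (e.strictMono hlt)
  have hmono : ∀ i j, i < j → j < m → c i < c j :=
    fun i j hij hjm => (Tg_lt_iff R).1 (hglt i j hij hjm)
  have h0 : 0 ≤ c 0 := rep_nonneg _ _
  have hlast : c (m - 1) < 2 * R := rep_lt _ _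
  have hp : 0 < 2 * R := by linarith
  have hdist_dl : ∀ u v : ℕ, dist (g u) (g v) = dl (2 * R) (c u) (c v) :=
    fun u v => dist_eq_min (2 * R) (g u) (g v)
  have hginj : ∀ i < m, ∀ j < m, g i = g j → i = j := by
    intro i hi j hj hgij
    rw [hg] at hgij; dsimp only at hgij
    rw [dif_pos hi, dif_pos hj] at hgij
    have := e.injective (Subtype.coe_injective hgij)
    exact Fin.mk.inj_iff.1 this
  obtain ⟨n, hmn⟩ : ∃ n, m = n + 1 := ⟨m - 1, by omega⟩
  set L : List (AddCircle (2 * R)) := (List.range m).map g with hL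
  have hLnd : L.Nodup := by
    rw [hL]
    refine List.Nodup.map_on ?_ (List.nodup_range (n := m))
    intro i hi j hj hgij
    exact hginj i (List.mem_range.1 hi) j (List.mem_range.1 hj) hgij
  have heta : ∀ (a : AddCircle (2 * R)) (ha : a ∈ X),
      g ((e.symm ⟨a, ha⟩ : Fin m) : ℕ) = a := by
    intro a ha
    rw [hg]; dsimp only
    rw [dif_pos (e.symm ⟨a, ha⟩).2]
    have h1 : (⟨((e.symm ⟨a, ha⟩ : Fin m) : ℕ), (e.symm ⟨a, ha⟩).2⟩ : Fin m)
        = e.symm ⟨a, ha⟩ := by ext; rfl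
    rw [h1, OrderIso.apply_symm_apply]
  have hLtf : ∀ a, a ∈ L ↔ a ∈ X := by
    intro a; rw [hL]
    constructor
    · intro ha; obtain ⟨i, _, rfl⟩ := List.mem_map.1 ha; exact hgX i
    · intro ha
      exact List.mem_map.2 ⟨((e.symm ⟨a, ha⟩ : Fin m) : ℕ),
        List.mem_range.2 (e.symm ⟨a, ha⟩).2, heta a ha⟩
  have hLsort : List.Pairwise (Tg R).lt L := by
    rw [hL, List.pairwise_map]
    refine List.Pairwise.imp_of_mem ?_ (List.pairwise_lt_range (n := m))
    intro a b ha hb hab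
    exact hglt a b hab (List.mem_range.1 hb)
  have hlord : lord dist (Tg R) X = pathLen dist L :=
    lord_eq_of (Tg R) hLnd (toFinset_eq_of_forall hLtf) hLsort
  have hLpath : pathLen dist L = ∑ i ∈ Finset.range (m - 1), dl (2 * R) (c i) (c (i + 1)) := by
    rw [hL, hmn, pathLen_range_map dist n g]
    have : n + 1 - 1 = n := rfl
    rw [this]
    exact Finset.sum_congr rfl (fun i _ => hdist_dl i (i + 1))
  have hmemlX : ∀ x ∈ l, x ∈ X := fun x hx => (htf x).1 hx
  have htf' : l.toFinset = X := toFinset_eq_of_forall htf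
  set σ : List ℕ := l.attach.map
    (fun x => ((e.symm ⟨x.1, hmemlX x.1 x.2⟩ : Fin m) : ℕ)) with hσ
  have hσmapg : σ.map g = l := by
    rw [hσ, List.map_map]
    have h1 : l.attach.map (fun x => g ((e.symm ⟨x.1, hmemlX x.1 x.2⟩ : Fin m) : ℕ))
        = l.attach.map (fun x => x.1) :=
      List.map_congr_left (fun x _ => heta x.1 (hmemlX x.1 x.2))
    have h2 : (g ∘ fun (x : {y // y ∈ l}) => ((e.symm ⟨x.1, hmemlX x.1 x.2⟩ : Fin m) : ℕ))
        = fun x => g ((e.symm ⟨x.1, hmemlX x.1 x.2⟩ : Fin m) : ℕ) := rfl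
    rw [h2, h1]
    have h3 := List.attach_map_val (l := l) (f := id)
    simpa using h3
  have hσnd : σ.Nodup := by
    rw [hσ]
    refine List.Nodup.map_on ?_ hnd.attach
    intro x _ y _ hxy
    have h1 : (e.symm ⟨x.1, hmemlX x.1 x.2⟩ : Fin m) = (e.symm ⟨y.1, hmemlX y.1 y.2⟩ : Fin m) :=
      Fin.val_injective hxy
    have h2 := e.symm.injective h1
    have h3 : x.1 = y.1 := Subtype.mk_eq_mk.1 h2
    exact Subtype.ext h3
  have hσlen : σ.length = m := by
    rw [hσ, List.length_map, List.length_attach]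
    rw [hmdef, ← htf', List.toFinset_card_of_nodup hnd]
  have hσtf : σ.toFinset = Finset.range m := by
    apply Finset.eq_of_subset_of_card_le
    · intro i hi
      rw [List.mem_toFinset] at hi
      rw [hσ] at hi
      obtain ⟨x, _, rfl⟩ := List.mem_map.1 hi
      exact Finset.mem_range.2 (e.symm ⟨x.1, hmemlX x.1 x.2⟩).2
    · rw [Finset.card_range, List.toFinset_card_of_nodup hσnd, hσlen]
  have hcore := core_ineq hp (by omega : 2 ≤ m) hmono h0 hlast σ hσtf
  have hpl : pathLen dist l = pathLen (fun a b => dl (2 * R) (c a) (c b)) σ := by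
    rw [← hσmapg, pathLen_map dist g σ]
    congr 1
    funext a b
    exact hdist_dl a b
  rw [hlord, hLpath, hpl]
  exact hcore

lemma ORd_Tg_le_two (k : ℕ) : ORd (fun x y : AddCircle (2 * R) => dist x y) (Tg R) k ≤ 2 := by
  apply Real.sSup_le
  · rintro r ⟨X, hc2, _, rfl⟩
    have hpos := lopt_pos hc2
    rw [div_le_iff₀ hpos]
    have h1 : lord dist (Tg R) X / 2 ≤ lopt dist X :=
      le_lopt (fun l hnd htf => by
        have := lord_le_two_pathLen R hR X hc2 l hnd (mem_iff_of_toFinset_eq htf)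
        linarith)
    linarith
  · norm_num

end good

theorem stmt8' (R : ℝ) (hR : 0 < R) :
    (∀ k : ℕ, 2 ≤ k → ORsp (fun x y : AddCircle (2 * R) => dist x y) k = 2) ∧
    (∀ T : LinearOrder (AddCircle (2 * R)), ∀ ε : ℝ, 0 < ε →
      ∃ x1 x2 x3 p q : AddCircle (2 * R),
        T.lt x1 x2 ∧ T.lt x2 x3 ∧
        dist p q = R ∧ dist x1 p < ε ∧ dist x3 p < ε ∧ dist x2 q < ε) := by
  haveI : Fact (0 < 2 * R) := ⟨by linarith⟩
  constructor
  · intro k hk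
    haveI : Nonempty (LinearOrder (AddCircle (2 * R))) := ⟨Tg R⟩
    apply le_antisymm
    · refine le_trans (ciInf_le ⟨0, ?_⟩ (Tg R)) (ORd_Tg_le_two R hR k)
      rintro x ⟨T, rfl⟩
      exact ORd_nonneg R hR T k (by omega)
    · exact le_ciInf (fun T => ORd_ge_two R hR T k hk)
  · intro T ε hε
    exact snake_main R hR T ε hε


/-- For the circle of length `2R` (modelled as `AddCircle (2R)` with its quotient metric,
which is the inner arc metric), `OR(k) = 2` for all `k ≥ 2`; moreover for every order `T`
and every `ε > 0` there is a snake `x₁ <_T x₂ <_T x₃` with `x₁, x₃` in the `ε`-neighbourhood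
of some point `p` and `x₂` in the `ε`-neighbourhood of the antipodal point of `p`. -/
theorem stmt8 (R : ℝ) (hR : 0 < R) :
    (∀ k : ℕ, 2 ≤ k → ORsp (fun x y : AddCircle (2 * R) => dist x y) k = 2) ∧
    (∀ T : LinearOrder (AddCircle (2 * R)), ∀ ε : ℝ, 0 < ε →
      ∃ x1 x2 x3 p q : AddCircle (2 * R),
        T.lt x1 x2 ∧ T.lt x2 x3 ∧
        dist p q = R ∧ dist x1 p < ε ∧ dist x3 p < ε ∧ dist x2 q < ε) := stmt8' R hR
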